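/- Let S be an ℓ×ℓ symmetric positive definite matrix with eigenvalues λ₁ ≥ … ≥ λ_ℓ and orthonormal eigenvectors u₁,…,u_ℓ, and fix q < ℓ. Define σ² := (1/(ℓ−q)) Σ_{j=q+1}^{ℓ} λ_j, U_q := [u₁,…,u_q], Λ_q := diag(λ₁,…,λ_q), and W := U_q(Λ_q − σ²I)^{1/2}. Assume λ_q > σ². Then (W, σ²) is a global minimizer over all (W', s) with s > 0 of the function f(W', s) := log det(W'W'ᵀ + sI) + trace((W'W'ᵀ + sI)⁻¹ S). -/

import Mathlib

open Matrix Finset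

namespace PPCAAux

/-- extension of a `Fin n` tuple to `ℕ` by zero -/
noncomputable def extz {n : ℕ} (f : Fin n → ℝ) : ℕ → ℝ :=
  fun j => if h : j < n then f ⟨j, h⟩ else 0

lemma sum_ext_range {n : ℕ} (f : Fin n → ℝ) :
    ∑ j ∈ Finset.range n, extz f j = ∑ j : Fin n, f j := by
  rw [← Fin.sum_univ_eq_sum_range (extz f) n]
  refine Finset.sum_congr rfl fun i _ => ?_
  simp [extz, i.isLt]

lemma sum_ext_filter {n k : ℕ} (hk : k ≤ n) (f : Fin n → ℝ) :
    ∑ j ∈ Finset.range k, extz f j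
      = ∑ j ∈ Finset.univ.filter (fun j : Fin n => (j : ℕ) < k), f j := by
  have h1 : ∑ j ∈ Finset.range k, extz f j
      = ∑ j ∈ Finset.range n, (if j < k then extz f j else 0) := by
    rw [← Finset.sum_filter]
    congr 1
    ext j
    simp only [Finset.mem_filter, Finset.mem_range]
    omega
  rw [h1, ← Fin.sum_univ_eq_sum_range (fun j => if j < k then extz f j else 0) n,
    Finset.sum_filter]
  refine Finset.sum_congr rfl fun i _ => ?_
  by_cases h : (i : ℕ) < k <;> simp [h, extz, i.isLt]

lemma card_filter_lt {n k : ℕ} (hk : k ≤ n) :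
    (Finset.univ.filter (fun j : Fin n => (j : ℕ) < k)).card = k := by
  have h := Finset.card_bij (s := Finset.univ.filter (fun j : Fin n => (j : ℕ) < k))
    (t := Finset.range k) (fun (j : Fin n) _ => (j : ℕ))
    (by intro a ha; simp only [Finset.mem_filter] at ha; simp [ha.2])
    (by intro a _ b _ h; exact Fin.val_injective h)
    (by intro b hb
        simp only [Finset.mem_range] at hb
        exact ⟨⟨b, lt_of_lt_of_le hb hk⟩, by simp [hb], rfl⟩)
  rw [h, Finset.card_range]

/-- Abel summation positivity: nonneg antitone weights, nonneg partial sums. -/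
lemma abel_nonneg : ∀ (n : ℕ) (l h : ℕ → ℝ),
    (∀ i j, i ≤ j → j < n → l j ≤ l i) →
    (∀ j, j < n → 0 ≤ l j) →
    (∀ k, k ≤ n → 0 ≤ ∑ j ∈ Finset.range k, h j) →
    0 ≤ ∑ j ∈ Finset.range n, l j * h j := by
  intro n
  induction n with
  | zero => simp
  | succ n ih =>
    intro l h hmono hnn hps
    have e1 : ∑ j ∈ Finset.range n, (l j - l n) * h j
        = (∑ j ∈ Finset.range n, l j * h j) - l n * ∑ j ∈ Finset.range n, h j := by
      rw [Finset.mul_sum, ← Finset.sum_sub_distrib]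
      exact Finset.sum_congr rfl fun j _ => by ring
    have key : ∑ j ∈ Finset.range (n+1), l j * h j
        = (∑ j ∈ Finset.range n, (l j - l n) * h j)
          + l n * ∑ j ∈ Finset.range (n+1), h j := by
      rw [Finset.sum_range_succ (fun j => l j * h j), Finset.sum_range_succ h, e1]
      ring
    rw [key]
    have h1 : 0 ≤ ∑ j ∈ Finset.range n, (l j - l n) * h j := by
      refine ih _ h (fun i j hij hj => by
        have := hmono i j hij (by omega); linarith) (fun j hj => ?_)
        (fun k hk => hps k (by omega))
      have := hmono j n (by omega) (by omega)
      linarith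
    have h2 : 0 ≤ l n * ∑ j ∈ Finset.range (n+1), h j :=
      mul_nonneg (hnn n (by omega)) (hps (n+1) le_rfl)
    linarith

/-- Abel summation with equality at the end: antitone weights (any sign). -/
lemma abel_mono (n : ℕ) (l h : ℕ → ℝ)
    (hmono : ∀ i j, i ≤ j → j < n → l j ≤ l i)
    (hps : ∀ k, k ≤ n → 0 ≤ ∑ j ∈ Finset.range k, h j)
    (heq : ∑ j ∈ Finset.range n, h j = 0) :
    0 ≤ ∑ j ∈ Finset.range n, l j * h j := by
  rcases Nat.eq_zero_or_pos n with hn | hn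
  · simp [hn]
  have key : ∑ j ∈ Finset.range n, l j * h j
      = (∑ j ∈ Finset.range n, (l j - l (n-1)) * h j)
        + l (n-1) * ∑ j ∈ Finset.range n, h j := by
    rw [Finset.mul_sum, ← Finset.sum_add_distrib]
    exact Finset.sum_congr rfl fun j _ => by ring
  rw [key, heq, mul_zero, add_zero]
  refine abel_nonneg n _ h (fun i j hij hj => by
    have := hmono i j hij hj; linarith) (fun j hj => ?_) hps
  have := hmono j (n-1) (by omega) (by omega)
  linarith

lemma min_le_mul_weight {x w : ℝ} (hw0 : 0 ≤ w) (hw1 : w ≤ 1) :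
    min x 0 ≤ x * w := by
  rcases le_or_gt 0 x with h | h
  · have : min x 0 = 0 := min_eq_right h
    rw [this]; exact mul_nonneg h hw0
  · have : min x 0 = x := min_eq_left h.le
    rw [this]; nlinarith

/-- key rearrangement: sum of k smallest values bounds any [0,1]-weighted
combination with total weight k. -/
lemma sorted_partial_le_weighted {n : ℕ} (ν : Fin n → ℝ) (w : Fin n → ℝ) (k : ℕ)
    (hk : k ≤ n) (hw0 : ∀ i, 0 ≤ w i) (hw1 : ∀ i, w i ≤ 1)
    (hsum : ∑ i, w i = (k : ℝ)) :
    ∑ j ∈ Finset.univ.filter (fun j : Fin n => (j : ℕ) < k), (ν ∘ Tuple.sort ν) j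
      ≤ ∑ i, ν i * w i := by
  rcases Nat.eq_zero_or_pos k with hk0 | hk0
  · subst hk0
    have hw : ∀ i, w i = 0 := by
      intro i
      have h := (Finset.sum_eq_zero_iff_of_nonneg (fun i _ => hw0 i)).mp (by simpa using hsum)
      exact h i (Finset.mem_univ i)
    simp [hw]
  set m : Fin n → ℝ := ν ∘ Tuple.sort ν with hm
  have hmono : Monotone m := Tuple.monotone_sort ν
  have hkn : k - 1 < n := by omega
  set t : ℝ := m ⟨k-1, hkn⟩ with ht
  have step2 : ∀ i, min (ν i - t) 0 ≤ (ν i - t) * w i :=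
    fun i => min_le_mul_weight (hw0 i) (hw1 i)
  have step3 : ∑ i, min (ν i - t) 0 = ∑ j, min (m j - t) 0 :=
    (Equiv.sum_comp (Tuple.sort ν) (fun i => min (ν i - t) 0)).symm
  have step4 : ∑ j, min (m j - t) 0
      = ∑ j ∈ Finset.univ.filter (fun j : Fin n => (j : ℕ) < k), (m j - t) := by
    rw [← Finset.sum_filter_add_sum_filter_not Finset.univ
      (fun j : Fin n => (j : ℕ) < k) (fun j => min (m j - t) 0)]
    have e1 : ∑ j ∈ Finset.univ.filter (fun j : Fin n => (j : ℕ) < k), min (m j - t) 0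
        = ∑ j ∈ Finset.univ.filter (fun j : Fin n => (j : ℕ) < k), (m j - t) := by
      refine Finset.sum_congr rfl fun j hj => ?_
      simp only [Finset.mem_filter] at hj
      have hle : m j ≤ t := hmono (show j ≤ ⟨k-1, hkn⟩ from by
        rw [Fin.le_def]; simp; omega)
      simp [min_eq_left, sub_nonpos.mpr hle]
    have e2 : ∑ j ∈ Finset.univ.filter (fun j : Fin n => ¬ (j : ℕ) < k), min (m j - t) 0
        = 0 := by
      refine Finset.sum_eq_zero fun j hj => ?_
      simp only [Finset.mem_filter, not_lt] at hj
      have hge : t ≤ m j := hmono (show (⟨k-1, hkn⟩ : Fin n) ≤ j from by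
        rw [Fin.le_def]; simp; omega)
      simp [min_eq_right, sub_nonneg.mpr hge]
    rw [e1, e2, add_zero]
  have step5 : ∑ j ∈ Finset.univ.filter (fun j : Fin n => (j : ℕ) < k), (m j - t)
      = (∑ j ∈ Finset.univ.filter (fun j : Fin n => (j : ℕ) < k), m j) - t * k := by
    rw [Finset.sum_sub_distrib, Finset.sum_const, card_filter_lt hk]
    simp [mul_comm]
  have step1 : ∑ i, ν i * w i
      = (∑ i, (ν i - t) * w i) + t * k := by
    have : ∑ i, (ν i - t) * w i = (∑ i, ν i * w i) - t * ∑ i, w i := by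
      rw [Finset.mul_sum, ← Finset.sum_sub_distrib]
      exact Finset.sum_congr rfl fun i _ => by ring
    rw [this, hsum]; ring
  have hge : ∑ i, min (ν i - t) 0 ≤ ∑ i, (ν i - t) * w i :=
    Finset.sum_le_sum fun i _ => step2 i
  rw [step1]
  rw [step3, step4, step5] at hge
  linarith

lemma scalar1 {a x : ℝ} (ha : 0 < a) (hx : 0 < x) :
    1 + Real.log a ≤ a * x - Real.log x := by
  have h := Real.log_le_sub_one_of_pos (mul_pos ha hx)
  rw [Real.log_mul (ne_of_gt ha) (ne_of_gt hx)] at h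
  linarith

lemma scalar2 {r σ2 s : ℝ} (hr : 0 < r) (hσ : 0 < σ2) (hs : 0 < s) :
    r * (1 + Real.log σ2) ≤ (r * σ2) * s⁻¹ + r * Real.log s := by
  have h := Real.log_le_sub_one_of_pos (div_pos hσ hs)
  rw [Real.log_div (ne_of_gt hσ) (ne_of_gt hs)] at h
  have h2 : r * (Real.log σ2 - Real.log s) ≤ r * (σ2 / s - 1) :=
    mul_le_mul_of_nonneg_left h hr.le
  have h3 : σ2 / s = σ2 * s⁻¹ := div_eq_mul_inv _ _
  rw [h3] at h2
  nlinarith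


section MatrixAux
variable {n : ℕ}

lemma conj_det (V : Matrix (Fin n) (Fin n) ℝ) (hV : Vᵀ * V = 1) (D : Fin n → ℝ) :
    (V * Matrix.diagonal D * Vᵀ).det = ∏ i, D i := by
  have h1 : Vᵀ.det * V.det = 1 := by rw [← Matrix.det_mul, hV, Matrix.det_one]
  rw [Matrix.det_mul, Matrix.det_mul, Matrix.det_diagonal]
  linear_combination (∏ i, D i) * h1

lemma conj_mul_conj (V : Matrix (Fin n) (Fin n) ℝ) (hV : Vᵀ * V = 1)
    (D E : Fin n → ℝ) :
    (V * Matrix.diagonal D * Vᵀ) * (V * Matrix.diagonal E * Vᵀ)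
      = V * Matrix.diagonal (fun i => D i * E i) * Vᵀ := by
  simp only [Matrix.mul_assoc]
  rw [← Matrix.mul_assoc Vᵀ V, hV, Matrix.one_mul,
    ← Matrix.mul_assoc (Matrix.diagonal D), Matrix.diagonal_mul_diagonal]

lemma conj_inv (V : Matrix (Fin n) (Fin n) ℝ) (hV : Vᵀ * V = 1)
    (D : Fin n → ℝ) (hD : ∀ i, D i ≠ 0) :
    (V * Matrix.diagonal D * Vᵀ)⁻¹ = V * Matrix.diagonal (fun i => (D i)⁻¹) * Vᵀ := by
  apply Matrix.inv_eq_right_inv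
  rw [conj_mul_conj V hV]
  have : (fun i => D i * (D i)⁻¹) = fun _ => (1:ℝ) := by
    funext i; exact mul_inv_cancel₀ (hD i)
  rw [this, Matrix.diagonal_one, Matrix.mul_one, mul_eq_one_comm.mpr hV]

lemma trace_mul_diag (B : Matrix (Fin n) (Fin n) ℝ) (d : Fin n → ℝ) :
    (B * Matrix.diagonal d).trace = ∑ j, d j * B j j := by
  rw [Matrix.trace]
  refine Finset.sum_congr rfl fun j _ => ?_
  rw [Matrix.diag_apply, Matrix.mul_diagonal, mul_comm]

lemma trace_conj_form (M : Matrix (Fin n) (Fin n) ℝ) (U : Matrix (Fin n) (Fin n) ℝ)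
    (lam : Fin n → ℝ) :
    (M * (U * Matrix.diagonal lam * Uᵀ)).trace
      = ∑ j, lam j * (Uᵀ * M * U) j j := by
  have h1 : M * (U * Matrix.diagonal lam * Uᵀ) = (M * U * Matrix.diagonal lam) * Uᵀ := by
    simp only [Matrix.mul_assoc]
  rw [h1, Matrix.trace_mul_comm, ← Matrix.mul_assoc, ← Matrix.mul_assoc,
    trace_mul_diag]

lemma pad_sum {q : ℕ} (hq : q ≤ n) (F : Fin n → ℝ)
    (hF : ∀ i : Fin n, ¬((i:ℕ) < q) → F i = 0) :
    ∑ i, F i = ∑ i : Fin q, F (Fin.castLE hq i) := by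
  rw [← Finset.sum_filter_of_ne (p := fun i : Fin n => (i:ℕ) < q)
    (fun x _ hx => by by_contra h; exact hx (hF x h))]
  refine (Finset.sum_bij (fun (i : Fin q) _ => Fin.castLE hq i) ?_ ?_ ?_ ?_).symm
  · intro a _; simp [a.isLt]
  · intro a _ b _ h
    exact Fin.val_injective (by simpa [Fin.castLE] using congrArg Fin.val h)
  · intro b hb
    simp only [Finset.mem_filter] at hb
    exact ⟨⟨(b:ℕ), hb.2⟩, Finset.mem_univ _, rfl⟩
  · intro a _; rfl

lemma submatrix_conj_eq {q : ℕ} (hq : q ≤ n) (U : Matrix (Fin n) (Fin n) ℝ)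
    (h : Fin q → ℝ) (pad : Fin n → ℝ)
    (hpad1 : ∀ i : Fin q, pad (Fin.castLE hq i) = h i)
    (hpad2 : ∀ i : Fin n, ¬((i:ℕ) < q) → pad i = 0) :
    U.submatrix id (Fin.castLE hq) * Matrix.diagonal h * (U.submatrix id (Fin.castLE hq))ᵀ
      = U * Matrix.diagonal pad * Uᵀ := by
  ext a b
  rw [Matrix.mul_apply, Matrix.mul_apply]
  simp only [Matrix.mul_diagonal, Matrix.transpose_apply, Matrix.submatrix_apply, id_eq]
  rw [pad_sum hq (fun i => U a i * pad i * U b i)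
    (fun i hi => show U a i * pad i * U b i = 0 by rw [hpad2 i hi]; ring)]
  refine Finset.sum_congr rfl fun i _ => ?_
  show U a (Fin.castLE hq i) * h i * U b (Fin.castLE hq i)
    = U a (Fin.castLE hq i) * pad (Fin.castLE hq i) * U b (Fin.castLE hq i)
  rw [hpad1 i]

end MatrixAux

end PPCAAux

open Matrix

set_option maxHeartbeats 1600000 in
theorem ppca_global_minimizer {ℓ q : ℕ} (hq : q < ℓ)
    (S : Matrix (Fin ℓ) (Fin ℓ) ℝ) (hS : S.PosDef)
    (lam : Fin ℓ → ℝ) (hlam : Antitone lam)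
    (U : Matrix (Fin ℓ) (Fin ℓ) ℝ) (hU : Uᵀ * U = 1)
    (hSdecomp : S = U * Matrix.diagonal lam * Uᵀ)
    (σ2 : ℝ)
    (hσ2 : σ2 = (1 / (ℓ - q : ℝ)) * ∑ j ∈ Finset.univ.filter (fun j : Fin ℓ => q ≤ (j : ℕ)), lam j)
    (hgap : ∀ i : Fin ℓ, (i : ℕ) < q → σ2 < lam i)
    (W : Matrix (Fin ℓ) (Fin q) ℝ)
    (hW : W = U.submatrix id (Fin.castLE hq.le) *
      Matrix.diagonal (fun i : Fin q => Real.sqrt (lam (Fin.castLE hq.le i) - σ2))) :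
    ∀ (W' : Matrix (Fin ℓ) (Fin q) ℝ) (s : ℝ), 0 < s →
      Real.log (W * Wᵀ + σ2 • (1 : Matrix (Fin ℓ) (Fin ℓ) ℝ)).det +
          ((W * Wᵀ + σ2 • (1 : Matrix (Fin ℓ) (Fin ℓ) ℝ))⁻¹ * S).trace ≤
        Real.log (W' * W'ᵀ + s • (1 : Matrix (Fin ℓ) (Fin ℓ) ℝ)).det +
          ((W' * W'ᵀ + s • (1 : Matrix (Fin ℓ) (Fin ℓ) ℝ))⁻¹ * S).trace := by
  classical
  open PPCAAux Finset in
  have hUUt : U * Uᵀ = 1 := mul_eq_one_comm.mp hU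
  -- positivity of the eigenvalues of S
  have hsandwichU : ∀ D : Fin ℓ → ℝ, Uᵀ * (U * Matrix.diagonal D * Uᵀ) * U
      = Matrix.diagonal D := by
    intro D
    calc Uᵀ * (U * Matrix.diagonal D * Uᵀ) * U
        = (Uᵀ * U) * Matrix.diagonal D * (Uᵀ * U) := by
          simp only [Matrix.mul_assoc]
      _ = Matrix.diagonal D := by rw [hU, Matrix.one_mul, Matrix.mul_one]
  have hlam_pos : ∀ i, 0 < lam i := by
    intro i
    have hdiag : (Uᵀ * S * U) i i = lam i := by
      rw [hSdecomp, hsandwichU lam, Matrix.diagonal_apply_eq]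
    set x : Fin ℓ → ℝ := fun a => U a i with hx
    have hx1 : (Uᵀ * U) i i = ∑ a, x a * x a := by
      rw [Matrix.mul_apply]
      exact Finset.sum_congr rfl fun a _ => by rw [Matrix.transpose_apply]
    have hxx : ∑ a, x a * x a = 1 := by rw [← hx1, hU, Matrix.one_apply_eq]
    have hx0 : x ≠ 0 := by
      intro h
      rw [h] at hxx
      simp at hxx
    have hform : dotProduct (star x) (S *ᵥ x) = (Uᵀ * S * U) i i := by
      simp only [dotProduct, Matrix.mulVec, Matrix.mul_apply,
        Matrix.transpose_apply, star_trivial, dotProduct,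
        Finset.sum_mul, Finset.mul_sum]
      rw [Finset.sum_comm]
      exact Finset.sum_congr rfl fun a _ => Finset.sum_congr rfl fun b _ => by
        show x b * (S b a * x a) = x b * S b a * x a
        ring
    have := hS.dotProduct_mulVec_pos hx0
    rw [hform, hdiag] at this
    exact this
  -- basic positivity
  have hr : (0:ℝ) < (ℓ:ℝ) - q := by
    have : (q:ℝ) < ℓ := by exact_mod_cast hq
    linarith
  set r : ℝ := (ℓ:ℝ) - q with hrdef
  set T : ℝ := ∑ j ∈ Finset.univ.filter (fun j : Fin ℓ => q ≤ (j : ℕ)), lam j with hTdef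
  have hT : 0 < T := by
    refine Finset.sum_pos (fun i _ => hlam_pos i) ⟨⟨q, hq⟩, by simp⟩
  have hσpos : 0 < σ2 := by
    rw [hσ2]
    exact mul_pos (by positivity) hT
  have hTσ : T = r * σ2 := by
    rw [hσ2]
    field_simp
  -- cardinality of head and tail index sets
  have hcard_head : (Finset.univ.filter (fun j : Fin ℓ => (j:ℕ) < q)).card = q :=
    card_filter_lt hq.le
  have hcard_tail : ((Finset.univ.filter (fun j : Fin ℓ => ¬ (j:ℕ) < q)).card : ℝ) = r := by
    have h1 : (Finset.univ.filter (fun j : Fin ℓ => ¬ (j:ℕ) < q)).card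
        = ℓ - q := by
      have := Finset.card_filter_add_card_filter_not
        (s := (Finset.univ : Finset (Fin ℓ))) (p := fun j : Fin ℓ => (j:ℕ) < q)
      rw [hcard_head, Finset.card_univ, Fintype.card_fin] at this
      omega
    rw [h1, hrdef, Nat.cast_sub hq.le]
  have hT_tail : ∑ j ∈ Finset.univ.filter (fun j : Fin ℓ => ¬ (j:ℕ) < q), lam j = T := by
    rw [hTdef]
    exact Finset.sum_congr (by ext j; simp [not_lt]) fun _ _ => rfl
  -- the left-hand side matrix is U * diagonal d * Uᵀ
  set d : Fin ℓ → ℝ := fun i => if (i:ℕ) < q then lam i else σ2 with hddef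
  have hd_pos : ∀ i, 0 < d i := by
    intro i
    by_cases h : (i:ℕ) < q
    · simpa [hddef, h] using hlam_pos i
    · simpa [hddef, h] using hσpos
  have hCstar : W * Wᵀ + σ2 • (1 : Matrix (Fin ℓ) (Fin ℓ) ℝ)
      = U * Matrix.diagonal d * Uᵀ := by
    set pad : Fin ℓ → ℝ := fun i => if (i:ℕ) < q then lam i - σ2 else 0 with hpaddef
    have hWWt : W * Wᵀ = U * Matrix.diagonal pad * Uᵀ := by
      rw [hW, Matrix.transpose_mul, Matrix.diagonal_transpose]
      have hassoc : U.submatrix id (Fin.castLE hq.le)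
            * Matrix.diagonal (fun i : Fin q => Real.sqrt (lam (Fin.castLE hq.le i) - σ2))
            * (Matrix.diagonal (fun i : Fin q => Real.sqrt (lam (Fin.castLE hq.le i) - σ2))
              * (U.submatrix id (Fin.castLE hq.le))ᵀ)
          = U.submatrix id (Fin.castLE hq.le)
            * Matrix.diagonal (fun i : Fin q => lam (Fin.castLE hq.le i) - σ2)
            * (U.submatrix id (Fin.castLE hq.le))ᵀ := by
        have hfun : (fun i : Fin q => Real.sqrt (lam (Fin.castLE hq.le i) - σ2)
              * Real.sqrt (lam (Fin.castLE hq.le i) - σ2))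
            = fun i : Fin q => lam (Fin.castLE hq.le i) - σ2 := by
          funext i
          exact Real.mul_self_sqrt (by
            have := hgap (Fin.castLE hq.le i) (by simpa using i.isLt)
            linarith)
        rw [← Matrix.mul_assoc, Matrix.mul_assoc (U.submatrix id (Fin.castLE hq.le)),
          Matrix.diagonal_mul_diagonal, hfun]
      rw [hassoc]
      exact submatrix_conj_eq hq.le U _ pad
        (fun i => by simp [hpaddef, i.isLt])
        (fun i hi => by simp [hpaddef, hi])
    rw [hWWt]
    have h1 : σ2 • (1 : Matrix (Fin ℓ) (Fin ℓ) ℝ)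
        = U * Matrix.diagonal (fun _ : Fin ℓ => σ2) * Uᵀ := by
      rw [← Matrix.smul_one_eq_diagonal, Matrix.mul_smul, Matrix.mul_one,
        Matrix.smul_mul, hUUt]
    have hfun2 : (fun i : Fin ℓ => pad i + σ2) = d := by
      funext i
      by_cases h : (i:ℕ) < q <;> simp [hpaddef, hddef, h]
    rw [h1, ← Matrix.add_mul, ← Matrix.mul_add, Matrix.diagonal_add, hfun2]
  -- evaluate the left-hand side
  have hLdet : Real.log (W * Wᵀ + σ2 • (1 : Matrix (Fin ℓ) (Fin ℓ) ℝ)).det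
      = (∑ j ∈ Finset.univ.filter (fun j : Fin ℓ => (j:ℕ) < q), Real.log (lam j))
        + r * Real.log σ2 := by
    rw [hCstar, conj_det U hU d, Real.log_prod (fun i _ => (hd_pos i).ne')]
    rw [← Finset.sum_filter_add_sum_filter_not Finset.univ (fun j : Fin ℓ => (j:ℕ) < q)]
    congr 1
    · exact Finset.sum_congr rfl fun j hj => by
        simp only [Finset.mem_filter] at hj
        simp [hddef, hj.2]
    · rw [Finset.sum_congr rfl (fun j hj => by
        simp only [Finset.mem_filter] at hj
        simp [hddef, hj.2] : ∀ j ∈ Finset.univ.filter (fun j : Fin ℓ => ¬(j:ℕ) < q),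
          Real.log (d j) = Real.log σ2), Finset.sum_const, nsmul_eq_mul, hcard_tail]
  have hLtr : ((W * Wᵀ + σ2 • (1 : Matrix (Fin ℓ) (Fin ℓ) ℝ))⁻¹ * S).trace
      = (q:ℝ) + r := by
    rw [hCstar, conj_inv U hU d (fun i => (hd_pos i).ne'), hSdecomp,
      trace_conj_form, ]
    have : ∀ j, (Uᵀ * (U * Matrix.diagonal (fun i => (d i)⁻¹) * Uᵀ) * U) j j
        = (d j)⁻¹ := by
      intro j
      rw [hsandwichU, Matrix.diagonal_apply_eq]
    rw [Finset.sum_congr rfl fun j _ => by rw [this j]]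
    rw [← Finset.sum_filter_add_sum_filter_not Finset.univ (fun j : Fin ℓ => (j:ℕ) < q)]
    congr 1
    · rw [Finset.sum_congr rfl (fun j hj => by
        simp only [Finset.mem_filter] at hj
        rw [show d j = lam j by simp [hddef, hj.2],
          mul_inv_cancel₀ (hlam_pos j).ne'] : ∀ j ∈ Finset.univ.filter
            (fun j : Fin ℓ => (j:ℕ) < q), lam j * (d j)⁻¹ = 1)]
      rw [Finset.sum_const, hcard_head, nsmul_eq_mul, mul_one]
    · rw [Finset.sum_congr rfl (fun j hj => by
        simp only [Finset.mem_filter] at hj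
        rw [show d j = σ2 by simp [hddef, hj.2]] : ∀ j ∈ Finset.univ.filter
          (fun j : Fin ℓ => ¬(j:ℕ) < q), lam j * (d j)⁻¹ = lam j * σ2⁻¹)]
      rw [← Finset.sum_mul, hT_tail, hTσ, mul_assoc, mul_inv_cancel₀ hσpos.ne', mul_one]
  intro W' s hs
  rw [hLdet, hLtr]
  -- spectral decomposition of W' * W'ᵀ
  have hA_psd : (W' * W'ᵀ).PosSemidef := by
    have h := Matrix.posSemidef_self_mul_conjTranspose W'
    rwa [Matrix.conjTranspose_eq_transpose_of_trivial] at h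
  have hAh : (W' * W'ᵀ).IsHermitian := hA_psd.1
  set μ : Fin ℓ → ℝ := hAh.eigenvalues with hμdef
  set V : Matrix (Fin ℓ) (Fin ℓ) ℝ :=
    (Matrix.IsHermitian.eigenvectorUnitary hAh : Matrix (Fin ℓ) (Fin ℓ) ℝ) with hVdef
  have hVt : Vᵀ * V = 1 := by
    have h := Matrix.mem_unitaryGroup_iff'.mp (Matrix.IsHermitian.eigenvectorUnitary hAh).2
    rwa [Matrix.star_eq_conjTranspose, Matrix.conjTranspose_eq_transpose_of_trivial] at h
  have hVVt : V * Vᵀ = 1 := mul_eq_one_comm.mp hVt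
  have hspec : W' * W'ᵀ = V * Matrix.diagonal μ * Vᵀ := by
    have h := hAh.spectral_theorem
    simp only [Unitary.conjStarAlgAut_apply, Unitary.coe_star, Matrix.star_eq_conjTranspose,
      Matrix.conjTranspose_eq_transpose_of_trivial] at h
    simpa [RCLike.ofReal_real_eq_id] using h
  set D : Fin ℓ → ℝ := fun i => μ i + s with hDdef
  have hμ_nonneg : ∀ i, 0 ≤ μ i := fun i => hA_psd.eigenvalues_nonneg i
  have hD_pos : ∀ i, 0 < D i := fun i => by
    have := hμ_nonneg i
    simp only [hDdef]
    linarith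
  set ν : Fin ℓ → ℝ := fun i => (D i)⁻¹ with hνdef
  have hν_pos : ∀ i, 0 < ν i := fun i => inv_pos.mpr (hD_pos i)
  have hν_le : ∀ i, ν i ≤ s⁻¹ := fun i => by
    apply inv_anti₀ hs
    simp only [hDdef]
    have := hμ_nonneg i
    linarith
  have hCdec : W' * W'ᵀ + s • (1 : Matrix (Fin ℓ) (Fin ℓ) ℝ)
      = V * Matrix.diagonal D * Vᵀ := by
    have h1 : s • (1 : Matrix (Fin ℓ) (Fin ℓ) ℝ)
        = V * Matrix.diagonal (fun _ : Fin ℓ => s) * Vᵀ := by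
      rw [← Matrix.smul_one_eq_diagonal, Matrix.mul_smul, Matrix.mul_one,
        Matrix.smul_mul, hVVt]
    rw [hspec, h1, ← Matrix.add_mul, ← Matrix.mul_add, Matrix.diagonal_add, ← hDdef]
  have hdet : Real.log (W' * W'ᵀ + s • (1 : Matrix (Fin ℓ) (Fin ℓ) ℝ)).det
      = ∑ i, Real.log (D i) := by
    rw [hCdec, conj_det V hVt D, Real.log_prod fun i _ => (hD_pos i).ne']
  set β : Fin ℓ → ℝ := fun j => (Uᵀ * (V * Matrix.diagonal ν * Vᵀ) * U) j j with hβdef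
  have htr : ((W' * W'ᵀ + s • (1 : Matrix (Fin ℓ) (Fin ℓ) ℝ))⁻¹ * S).trace
      = ∑ j, lam j * β j := by
    rw [hCdec, conj_inv V hVt D (fun i => (hD_pos i).ne'), hSdecomp, trace_conj_form,
      ← hνdef]
  set Q : Matrix (Fin ℓ) (Fin ℓ) ℝ := Uᵀ * V with hQdef
  have hsand : Uᵀ * (V * Matrix.diagonal ν * Vᵀ) * U = Q * Matrix.diagonal ν * Qᵀ := by
    rw [hQdef, Matrix.transpose_mul, Matrix.transpose_transpose]
    simp only [Matrix.mul_assoc]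
  have hβ : ∀ j, β j = ∑ i, ν i * (Q j i)^2 := by
    intro j
    show (Uᵀ * (V * Matrix.diagonal ν * Vᵀ) * U) j j = _
    rw [hsand, Matrix.mul_apply]
    refine Finset.sum_congr rfl fun i _ => ?_
    rw [Matrix.mul_diagonal, Matrix.transpose_apply]
    ring
  have hQQt : Q * Qᵀ = 1 := by
    rw [hQdef, Matrix.transpose_mul, Matrix.transpose_transpose]
    calc Uᵀ * V * (Vᵀ * U) = Uᵀ * (V * Vᵀ) * U := by simp only [Matrix.mul_assoc]
      _ = 1 := by rw [hVVt, Matrix.mul_one, hU]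
  have hQtQ : Qᵀ * Q = 1 := mul_eq_one_comm.mp hQQt
  have hQrow : ∀ j, ∑ i, (Q j i)^2 = 1 := by
    intro j
    have h : (Q * Qᵀ) j j = (1 : Matrix (Fin ℓ) (Fin ℓ) ℝ) j j := by rw [hQQt]
    rw [Matrix.mul_apply, Matrix.one_apply_eq] at h
    rw [← h]
    exact Finset.sum_congr rfl fun i _ => by rw [Matrix.transpose_apply]; ring
  have hQcol : ∀ i, ∑ j, (Q j i)^2 = 1 := by
    intro i
    have h : (Qᵀ * Q) i i = (1 : Matrix (Fin ℓ) (Fin ℓ) ℝ) i i := by rw [hQtQ]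
    rw [Matrix.mul_apply, Matrix.one_apply_eq] at h
    rw [← h]
    exact Finset.sum_congr rfl fun j _ => by rw [Matrix.transpose_apply]; ring
  -- at most q nonzero eigenvalues
  have hcardμ : (Finset.univ.filter (fun i : Fin ℓ => μ i ≠ 0)).card ≤ q := by
    have h1 : (W' * W'ᵀ).rank ≤ q := by
      refine le_trans (Matrix.rank_mul_le_left W' W'ᵀ) ?_
      simpa using W'.rank_le_card_width
    have h2 := hAh.rank_eq_card_non_zero_eigs
    rw [Fintype.card_subtype] at h2
    rw [← hμdef] at h2
    omega
  set m : Fin ℓ → ℝ := ν ∘ ⇑(Tuple.sort ν) with hmdef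
  have hm_mono : Monotone m := Tuple.monotone_sort ν
  have hm_pos : ∀ j, 0 < m j := fun j => hν_pos _
  have hm_le : ∀ j, m j ≤ s⁻¹ := fun j => hν_le _
  have hm_tail : ∀ j : Fin ℓ, ¬((j:ℕ) < q) → m j = s⁻¹ := by
    intro j hj
    by_contra hne
    have hlt : m j < s⁻¹ := lt_of_le_of_ne (hm_le j) hne
    have hsub : Finset.univ.filter (fun j' : Fin ℓ => (j':ℕ) < (j:ℕ)+1)
        ⊆ Finset.univ.filter (fun j' : Fin ℓ => m j' ≠ s⁻¹) := by
      intro j' hj'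
      simp only [Finset.mem_filter, Finset.mem_univ, true_and] at hj' ⊢
      have hle : m j' ≤ m j := hm_mono (show j' ≤ j by rw [Fin.le_def]; omega)
      exact ne_of_lt (lt_of_le_of_lt hle hlt)
    have hc1 : (Finset.univ.filter (fun j' : Fin ℓ => (j':ℕ) < (j:ℕ)+1)).card = (j:ℕ)+1 :=
      card_filter_lt (by omega)
    have hc2 : (Finset.univ.filter (fun j' : Fin ℓ => m j' ≠ s⁻¹)).card
        = (Finset.univ.filter (fun i : Fin ℓ => ν i ≠ s⁻¹)).card := by
      apply Finset.card_bij (fun (j' : Fin ℓ) _ => Tuple.sort ν j')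
      · intro a ha
        simp only [Finset.mem_filter, Finset.mem_univ, true_and] at ha ⊢
        exact ha
      · intro a _ b _ h
        exact (Tuple.sort ν).injective h
      · intro b hb
        simp only [Finset.mem_filter, Finset.mem_univ, true_and] at hb
        refine ⟨(Tuple.sort ν).symm b, ?_, (Tuple.sort ν).apply_symm_apply b⟩
        simp only [Finset.mem_filter, Finset.mem_univ, true_and, hmdef,
          Function.comp_apply, (Tuple.sort ν).apply_symm_apply]
        exact hb
    have hc3 : (Finset.univ.filter (fun i : Fin ℓ => ν i ≠ s⁻¹)).card
        ≤ (Finset.univ.filter (fun i : Fin ℓ => μ i ≠ 0)).card := by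
      apply Finset.card_le_card
      intro i hi
      simp only [Finset.mem_filter, Finset.mem_univ, true_and] at hi ⊢
      intro h0
      apply hi
      simp only [hνdef, hDdef, h0, zero_add]
    have hq_le : q ≤ (j:ℕ) := not_lt.mp hj
    have := Finset.card_le_card hsub
    omega
  -- partial sum inequalities (Ky Fan)
  have hps : ∀ k, k ≤ ℓ → ∑ j ∈ Finset.univ.filter (fun j : Fin ℓ => (j:ℕ) < k), m j
      ≤ ∑ j ∈ Finset.univ.filter (fun j : Fin ℓ => (j:ℕ) < k), β j := by
    intro k hk
    set w : Fin ℓ → ℝ :=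
      fun i => ∑ j ∈ Finset.univ.filter (fun j : Fin ℓ => (j:ℕ) < k), (Q j i)^2 with hwdef
    have hrhs : ∑ j ∈ Finset.univ.filter (fun j : Fin ℓ => (j:ℕ) < k), β j
        = ∑ i, ν i * w i := by
      rw [Finset.sum_congr rfl (fun j _ => hβ j), Finset.sum_comm]
      exact Finset.sum_congr rfl fun i _ => (Finset.mul_sum _ _ _).symm
    have hlhs := sorted_partial_le_weighted ν w k hk
      (fun i => Finset.sum_nonneg fun j _ => sq_nonneg _)
      (fun i => by
        rw [hwdef, ← hQcol i]
        exact Finset.sum_le_sum_of_subset_of_nonneg (Finset.filter_subset _ _)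
          (fun j _ _ => sq_nonneg _))
      (by
        rw [hwdef, Finset.sum_comm, Finset.sum_congr rfl (fun j _ => hQrow j),
          Finset.sum_const, card_filter_lt hk, nsmul_eq_mul, mul_one])
    rw [hrhs]
    exact hlhs
  -- total sums agree
  have hβtr : ∑ j, β j = ∑ i, ν i := by
    have h1 : (Uᵀ * (V * Matrix.diagonal ν * Vᵀ) * U).trace = ∑ j, β j :=
      Finset.sum_congr rfl fun j _ => rfl
    have h2 : (Uᵀ * (V * Matrix.diagonal ν * Vᵀ) * U).trace
        = (V * Matrix.diagonal ν * Vᵀ).trace := by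
      rw [Matrix.trace_mul_cycle, hUUt, Matrix.one_mul]
    have h3 : (V * Matrix.diagonal ν * Vᵀ).trace = ∑ i, ν i := by
      rw [Matrix.trace_mul_cycle, hVt, Matrix.one_mul, Matrix.trace_diagonal]
    rw [← h1, h2, h3]
  have hmtr : ∑ j, m j = ∑ i, ν i := Equiv.sum_comp (Tuple.sort ν) ν
  -- Abel summation
  have habel : ∑ j, lam j * m j ≤ ∑ j, lam j * β j := by
    have key := abel_mono ℓ (extz lam) (extz (fun j => β j - m j))
      (fun i j hij hj => by
        have hi : i < ℓ := lt_of_le_of_lt hij hj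
        simp only [extz, dif_pos hi, dif_pos hj]
        exact hlam (show (⟨i, hi⟩ : Fin ℓ) ≤ ⟨j, hj⟩ from by rw [Fin.mk_le_mk]; exact hij))
      (fun k hk => by
        rw [sum_ext_filter hk, Finset.sum_sub_distrib]
        have := hps k hk
        linarith)
      (by rw [sum_ext_range, Finset.sum_sub_distrib, hβtr, hmtr, sub_self])
    have hconv : ∀ j ∈ Finset.range ℓ, extz lam j * extz (fun j => β j - m j) j
        = extz (fun j : Fin ℓ => lam j * (β j - m j)) j := by
      intro j hj
      simp only [Finset.mem_range] at hj
      simp [extz, dif_pos hj]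
    rw [Finset.sum_congr rfl hconv, sum_ext_range] at key
    have hexp : ∑ j, lam j * (β j - m j) = ∑ j, lam j * β j - ∑ j, lam j * m j := by
      rw [← Finset.sum_sub_distrib]
      exact Finset.sum_congr rfl fun j _ => by ring
    rw [hexp] at key
    linarith
  -- log sums
  have hlog : ∑ i, Real.log (D i) = ∑ j, (- Real.log (m j)) := by
    rw [← Equiv.sum_comp (Tuple.sort ν) (fun i => Real.log (D i))]
    refine Finset.sum_congr rfl fun j _ => ?_
    have hmj : m j = (D (Tuple.sort ν j))⁻¹ := rfl
    rw [hmj, Real.log_inv, neg_neg]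
  -- combine everything
  rw [hdet, htr]
  have hstep1 : ∑ j, (lam j * m j - Real.log (m j))
      ≤ (∑ i, Real.log (D i)) + ∑ j, lam j * β j := by
    have hexp : ∑ j, (lam j * m j - Real.log (m j))
        = (∑ j, lam j * m j) + ∑ j, (- Real.log (m j)) := by
      rw [← Finset.sum_add_distrib]
      exact Finset.sum_congr rfl fun j _ => by ring
    rw [hexp, ← hlog]
    linarith
  have hsplit : ∑ j, (lam j * m j - Real.log (m j))
      = (∑ j ∈ Finset.univ.filter (fun j : Fin ℓ => (j:ℕ) < q),
          (lam j * m j - Real.log (m j)))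
        + ∑ j ∈ Finset.univ.filter (fun j : Fin ℓ => ¬(j:ℕ) < q),
            (lam j * m j - Real.log (m j)) :=
    (Finset.sum_filter_add_sum_filter_not Finset.univ _ _).symm
  have hhead : (q:ℝ) + ∑ j ∈ Finset.univ.filter (fun j : Fin ℓ => (j:ℕ) < q),
      Real.log (lam j)
      ≤ ∑ j ∈ Finset.univ.filter (fun j : Fin ℓ => (j:ℕ) < q),
          (lam j * m j - Real.log (m j)) := by
    have h1 : ∑ j ∈ Finset.univ.filter (fun j : Fin ℓ => (j:ℕ) < q),
        (1 + Real.log (lam j))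
        ≤ ∑ j ∈ Finset.univ.filter (fun j : Fin ℓ => (j:ℕ) < q),
            (lam j * m j - Real.log (m j)) :=
      Finset.sum_le_sum fun j _ => scalar1 (hlam_pos j) (hm_pos j)
    rw [Finset.sum_add_distrib, Finset.sum_const, hcard_head, nsmul_eq_mul, mul_one] at h1
    exact h1
  have htail : ∑ j ∈ Finset.univ.filter (fun j : Fin ℓ => ¬(j:ℕ) < q),
      (lam j * m j - Real.log (m j)) = T * s⁻¹ + r * Real.log s := by
    rw [Finset.sum_congr rfl (fun j hj => by
      rw [hm_tail j (Finset.mem_filter.mp hj).2, Real.log_inv, sub_neg_eq_add] :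
      ∀ j ∈ Finset.univ.filter (fun j : Fin ℓ => ¬(j:ℕ) < q),
        lam j * m j - Real.log (m j) = lam j * s⁻¹ + Real.log s)]
    rw [Finset.sum_add_distrib, ← Finset.sum_mul, hT_tail, Finset.sum_const,
      nsmul_eq_mul, hcard_tail]
  have htail2 : r * (1 + Real.log σ2) ≤ T * s⁻¹ + r * Real.log s := by
    rw [hTσ]
    exact scalar2 hr hσpos hs
  have hexp2 : r * (1 + Real.log σ2) = r + r * Real.log σ2 := by ring
  rw [hexp2] at htail2
  rw [hsplit, htail] at hstep1
  calc (∑ j ∈ Finset.univ.filter (fun j : Fin ℓ => (j:ℕ) < q), Real.log (lam j))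
      + r * Real.log σ2 + ((q:ℝ) + r)
      = ((q:ℝ) + ∑ j ∈ Finset.univ.filter (fun j : Fin ℓ => (j:ℕ) < q), Real.log (lam j))
        + (r + r * Real.log σ2) := by ring
    _ ≤ (∑ j ∈ Finset.univ.filter (fun j : Fin ℓ => (j:ℕ) < q),
          (lam j * m j - Real.log (m j))) + (T * s⁻¹ + r * Real.log s) :=
        add_le_add hhead htail2
    _ ≤ (∑ i, Real.log (D i)) + ∑ j, lam j * β j := hstep1
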